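/- Let D be an n×n matrix over ℤ/2 with D·D = 0. Suppose A is an index such that every column of D with index strictly less than A is zero and the column D_A is nonzero, and set b = low(D, A). Let E be the matrix obtained from D by adding (mod 2) the column D_A to every column j ≠ A with D b j = 1, and let D' be the (n−2)×(n−2) matrix obtained from E by deleting row and column A and row and column b. Then: (1) D'·D' = 0; (2) for any upper-triangular unitriangular matrices V, V' such that R = D·V and R' = D'·V' are reduced, the set of pairs {(low(R, j), j) : column R_j nonzero} equals {(b, A)} together with the image, under the order-preserving inclusion of the remaining n−2 indices into the original n indices, of the set {(low(R', j), j) : column R'_j nonzero}. (Core of Theorem: making a single Morse matching (A, b) and computing the resulting Morse boundary is equivalent to resolving at once all future collisions caused by row b in the matrix-reduction algorithm, and records the persistence pair (b, A).) -/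

import Mathlib

/-- The `j`-th column of the matrix `R`. -/
def column {n : ℕ} (R : Matrix (Fin n) (Fin n) (ZMod 2)) (j : Fin n) : Fin n → ZMod 2 :=
  fun i => R i j

/-- `low v` is the largest index at which the vector `v` over `ℤ/2` is nonzero
(`⊥` if `v = 0`). -/
def low {n : ℕ} (v : Fin n → ZMod 2) : WithBot (Fin n) :=
  (Finset.univ.filter (fun i => v i ≠ 0)).max

/-- `lowM R j` is the lowest-one position of the `j`-th column of `R`. -/
def lowM {n : ℕ} (R : Matrix (Fin n) (Fin n) (ZMod 2)) (j : Fin n) : WithBot (Fin n) :=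
  low (column R j)

/-- A matrix over `ℤ/2` is reduced if its nonzero columns have pairwise distinct
lowest-one positions. -/
def ReducedMat {n : ℕ} (R : Matrix (Fin n) (Fin n) (ZMod 2)) : Prop :=
  ∀ j k : Fin n, j ≠ k → column R j ≠ 0 → column R k ≠ 0 → lowM R j ≠ lowM R k

/-- A matrix is upper-triangular with all diagonal entries equal to `1`. -/
def IsUpperUnitriangular {n : ℕ} (V : Matrix (Fin n) (Fin n) (ZMod 2)) : Prop :=
  (∀ i j : Fin n, j < i → V i j = 0) ∧ ∀ i : Fin n, V i i = 1

/-- The matrix obtained from `D` by adding (mod 2) the column `A` of `D` to every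
column `j ≠ A` having `D b j = 1`. -/
def addColA {n : ℕ} (D : Matrix (Fin n) (Fin n) (ZMod 2)) (A b : Fin n) :
    Matrix (Fin n) (Fin n) (ZMod 2) :=
  fun i j => if j ≠ A ∧ D b j = 1 then D i j + D i A else D i j

/-- The matrix obtained from `addColA D A b` by deleting rows and columns `A` and `b`,
indexed via the order-preserving inclusion of the remaining `n − 2` indices. -/
def morseReduce {n : ℕ} (D : Matrix (Fin n) (Fin n) (ZMod 2)) (A b : Fin n)
    (hcard : ({b, A}ᶜ : Finset (Fin n)).card = n - 2) :
    Matrix (Fin (n - 2)) (Fin (n - 2)) (ZMod 2) :=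
  fun i j =>
    addColA D A b (Finset.orderEmbOfFin _ hcard i) (Finset.orderEmbOfFin _ hcard j)

namespace MorseAux
open Finset

lemma zmod2_ne_zero {x : ZMod 2} (h : x ≠ 0) : x = 1 := by
  revert h; revert x; decide

lemma zmod2_add_self (x : ZMod 2) : x + x = 0 := by
  revert x; decide

lemma zmod2_cancel {a b : ZMod 2} (h : a + b = 0) : a = b := by
  revert h; revert a b; decide

lemma low_eq_bot {n : ℕ} {v : Fin n → ZMod 2} : low v = ⊥ ↔ v = 0 := by
  rw [low, Finset.max_eq_bot, Finset.filter_eq_empty_iff]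
  constructor
  · intro h; funext i; have := h (mem_univ i); simpa using this
  · intro h i _; simp [h]

lemma low_eq_coe_iff {n : ℕ} {v : Fin n → ZMod 2} {i : Fin n} :
    low v = (i : WithBot (Fin n)) ↔ v i ≠ 0 ∧ ∀ m, i < m → v m = 0 := by
  constructor
  · intro h
    have hi : i ∈ Finset.univ.filter (fun k => v k ≠ 0) := Finset.mem_of_max h
    refine ⟨(Finset.mem_filter.mp hi).2, fun m hm => ?_⟩
    by_contra hvm
    have : m ∈ Finset.univ.filter (fun k => v k ≠ 0) := by simp [hvm]
    have h2 : (m : WithBot (Fin n)) ≤ low v := Finset.le_max this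
    rw [h] at h2
    exact absurd (WithBot.coe_le_coe.mp h2) (not_le.mpr hm)
  · rintro ⟨h1, h2⟩
    apply le_antisymm
    · apply Finset.max_le
      intro m hm
      rcases Finset.mem_filter.mp hm with ⟨-, hvm⟩
      by_contra hle
      exact hvm (h2 m (by exact_mod_cast not_le.mp hle))
    · exact Finset.le_max (by simp [h1])

lemma low_ne_bot {n : ℕ} {v : Fin n → ZMod 2} (h : v ≠ 0) :
    ∃ i : Fin n, low v = (i : WithBot (Fin n)) := by
  rcases Option.ne_none_iff_exists'.mp (fun hb => h (low_eq_bot.mp hb)) with ⟨i, hi⟩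
  exact ⟨i, hi⟩

lemma col_ne_zero_iff_lowM {n : ℕ} {R : Matrix (Fin n) (Fin n) (ZMod 2)} {j : Fin n} :
    column R j ≠ 0 ↔ lowM R j ≠ ⊥ := by
  exact (not_congr low_eq_bot).symm

lemma apply_eq_zero_of_low_lt {n : ℕ} {v : Fin n → ZMod 2} {m : Fin n}
    (h : low v < (m : WithBot (Fin n))) : v m = 0 := by
  by_contra hv
  have : (m : WithBot (Fin n)) ≤ low v := Finset.le_max (by simp [hv])
  exact absurd this (not_le.mpr h)

/-- low of a linear combination of columns of a reduced matrix. -/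
lemma low_sum {n : ℕ} {R : Matrix (Fin n) (Fin n) (ZMod 2)} (hR : ReducedMat R)
    (c : Fin n → ZMod 2) :
    low (fun i => ∑ k, R i k * c k) =
      (Finset.univ.filter (fun k => c k ≠ 0 ∧ column R k ≠ 0)).sup (lowM R) := by
  set T := Finset.univ.filter (fun k => c k ≠ 0 ∧ column R k ≠ 0) with hT
  have hterm : ∀ i k, k ∉ T → R i k * c k = 0 := by
    intro i k hk
    rw [hT, Finset.mem_filter] at hk
    push_neg at hk
    rcases eq_or_ne (c k) 0 with h | h
    · rw [h, mul_zero]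
    · have : column R k = 0 := hk (mem_univ k) h
      have : R i k = 0 := by rw [show R i k = column R k i from rfl, this]; rfl
      rw [this, zero_mul]
  rcases T.eq_empty_or_nonempty with hTe | hTn
  · rw [hTe, Finset.sup_empty]
    rw [low_eq_bot]
    funext i
    rw [Finset.sum_eq_zero]
    · rfl
    · intro k _
      exact hterm i k (by rw [hTe]; exact notMem_empty k)
  · obtain ⟨k₀, hk₀T, hk₀⟩ := Finset.exists_mem_eq_sup T hTn (lowM R)
    rw [hT, Finset.mem_filter] at hk₀T
    obtain ⟨-, hc₀, hcol₀⟩ := hk₀T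
    obtain ⟨i₀, hi₀⟩ := low_ne_bot hcol₀
    rw [hk₀, show lowM R k₀ = (i₀ : WithBot (Fin n)) from hi₀]
    have hk₀T' : k₀ ∈ T := by rw [hT, Finset.mem_filter]; exact ⟨mem_univ _, hc₀, hcol₀⟩
    have key : ∀ k ∈ T, k ≠ k₀ → lowM R k < (i₀ : WithBot (Fin n)) := by
      intro k hkT hkk
      have hkc : column R k ≠ 0 := (Finset.mem_filter.mp hkT).2.2
      have hle : lowM R k ≤ (i₀ : WithBot (Fin n)) := by
        have h1 : (i₀ : WithBot (Fin n)) = T.sup (lowM R) := by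
          rw [hk₀]; exact hi₀.symm
        rw [h1]; exact Finset.le_sup hkT
      rcases lt_or_eq_of_le hle with h | h
      · exact h
      · exact absurd (h.trans hi₀.symm) (hR k k₀ hkk hkc hcol₀)
    rw [low_eq_coe_iff]
    constructor
    · have : ∀ k ∈ Finset.univ, k ≠ k₀ → R i₀ k * c k = 0 := by
        intro k _ hkk
        by_cases hkT : k ∈ T
        · have := key k hkT hkk
          have : R i₀ k = 0 := apply_eq_zero_of_low_lt (v := column R k) this
          rw [this, zero_mul]
        · exact hterm i₀ k hkT
      rw [Finset.sum_eq_single_of_mem k₀ (mem_univ k₀) this]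
      have h1 : R i₀ k₀ = 1 := by
        have : column R k₀ i₀ ≠ 0 := (low_eq_coe_iff.mp hi₀).1
        exact zmod2_ne_zero this
      rw [h1, one_mul]
      exact hc₀
    · intro m hm
      apply Finset.sum_eq_zero
      intro k _
      by_cases hkT : k ∈ T
      · have hlt : lowM R k < (m : WithBot (Fin n)) := by
          rcases eq_or_ne k k₀ with rfl | hkk
          · rw [lowM, hi₀]; exact_mod_cast hm
          · exact (key k hkT hkk).trans (by exact_mod_cast hm)
        have : R m k = 0 := apply_eq_zero_of_low_lt (v := column R k) hlt
        rw [this, zero_mul]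
      · exact hterm m k hkT
lemma unitri_mul {n : ℕ} {V W : Matrix (Fin n) (Fin n) (ZMod 2)}
    (hV : IsUpperUnitriangular V) (hW : IsUpperUnitriangular W) :
    IsUpperUnitriangular (V * W) := by
  constructor
  · intro i j hji
    rw [Matrix.mul_apply]
    apply Finset.sum_eq_zero
    intro k _
    rcases lt_or_ge k i with h | h
    · rw [hV.1 i k h, zero_mul]
    · rw [hW.1 k j (lt_of_lt_of_le hji h), mul_zero]
  · intro i
    rw [Matrix.mul_apply, Finset.sum_eq_single_of_mem i (Finset.mem_univ i)]
    · rw [hV.2, hW.2, one_mul]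
    · intro k _ hk
      rcases lt_or_ge k i with h | h
      · rw [hV.1 i k h, zero_mul]
      · rw [hW.1 k i (lt_of_le_of_ne h (Ne.symm hk)), mul_zero]

lemma unitri_det {n : ℕ} {V : Matrix (Fin n) (Fin n) (ZMod 2)}
    (hV : IsUpperUnitriangular V) : V.det = 1 := by
  rw [Matrix.det_of_upperTriangular (by intro i j hij; exact hV.1 i j hij)]
  simp [hV.2]

lemma unitri_inv {n : ℕ} {V : Matrix (Fin n) (Fin n) (ZMod 2)}
    (hV : IsUpperUnitriangular V) :
    IsUpperUnitriangular V⁻¹ ∧ V * V⁻¹ = 1 ∧ V⁻¹ * V = 1 := by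
  have hdet : IsUnit V.det := by rw [unitri_det hV]; exact isUnit_one
  have hVV : V * V⁻¹ = 1 := Matrix.mul_nonsing_inv V hdet
  have hVV' : V⁻¹ * V = 1 := Matrix.nonsing_inv_mul V hdet
  haveI : Invertible V := V.invertibleOfIsUnitDet hdet
  have htri : V⁻¹.BlockTriangular id :=
    Matrix.blockTriangular_inv_of_blockTriangular (by intro i j hij; exact hV.1 i j hij)
  have hup : ∀ i j : Fin n, j < i → V⁻¹ i j = 0 := fun i j h => htri h
  refine ⟨⟨hup, ?_⟩, hVV, hVV'⟩
  intro i
  have h1 : (1 : Matrix (Fin n) (Fin n) (ZMod 2)) i i = 1 := by simp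
  rw [← hVV', Matrix.mul_apply] at h1
  rw [Finset.sum_eq_single_of_mem i (Finset.mem_univ i)] at h1
  · rw [hV.2, mul_one] at h1; exact h1
  · intro k _ hk
    rcases lt_or_ge k i with h | h
    · rw [hup i k h, zero_mul]
    · rw [hV.1 k i (lt_of_le_of_ne h (Ne.symm hk)), mul_zero]

/-- key uniqueness step: multiplying a reduced matrix by upper unitriangular,
if the result is reduced, lows are unchanged columnwise. -/
lemma low_mul_eq {n : ℕ} {R W : Matrix (Fin n) (Fin n) (ZMod 2)}
    (hR : ReducedMat R) (hW : IsUpperUnitriangular W) (hRW : ReducedMat (R * W)) :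
    ∀ j, lowM (R * W) j = lowM R j := by
  suffices H : ∀ N : ℕ, ∀ j : Fin n, (j : ℕ) < N → lowM (R * W) j = lowM R j by
    intro j; exact H (j + 1) j (Nat.lt_succ_self _)
  intro N
  induction N with
  | zero => intro j h; omega
  | succ N IHN =>
  intro j hj
  have IH : ∀ k : Fin n, k < j → lowM (R * W) k = lowM R k := fun k hk =>
    IHN k (Nat.lt_of_lt_of_le hk (Nat.lt_succ_iff.mp hj))
  have hcol : column (R * W) j = fun i => ∑ k, R i k * W k j := by
    funext i; rw [column, Matrix.mul_apply]
  have hls : lowM (R * W) j =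
      (Finset.univ.filter (fun k => W k j ≠ 0 ∧ column R k ≠ 0)).sup (lowM R) := by
    rw [lowM, hcol, low_sum hR]
  set T := Finset.univ.filter (fun k => W k j ≠ 0 ∧ column R k ≠ 0) with hT
  have hTle : ∀ k ∈ T, k ≤ j := by
    intro k hk
    rcases Finset.mem_filter.mp hk with ⟨-, hWk, -⟩
    by_contra h
    exact hWk (hW.1 k j (not_le.mp h))
  by_cases hj : column R j ≠ 0
  · have hjT : j ∈ T := by
      rw [hT, Finset.mem_filter]
      exact ⟨Finset.mem_univ _, by rw [hW.2]; exact one_ne_zero, hj⟩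
    obtain ⟨k₀, hk₀T, hk₀⟩ := Finset.exists_mem_eq_sup T ⟨j, hjT⟩ (lowM R)
    have hcolk₀ : column R k₀ ≠ 0 := (Finset.mem_filter.mp hk₀T).2.2
    rcases eq_or_ne k₀ j with rfl | hne
    · rw [hls, hk₀]
    · exfalso
      have hk₀j : k₀ < j := lt_of_le_of_ne (hTle k₀ hk₀T) hne
      have h1 : lowM (R * W) k₀ = lowM R k₀ := IH k₀ hk₀j
      have h2 : lowM (R * W) j = lowM R k₀ := by rw [hls, hk₀]
      have hcRWk₀ : column (R * W) k₀ ≠ 0 := by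
        rw [col_ne_zero_iff_lowM, h1, ← col_ne_zero_iff_lowM]; exact hcolk₀
      have hcRWj : column (R * W) j ≠ 0 := by
        rw [col_ne_zero_iff_lowM, h2, ← col_ne_zero_iff_lowM]; exact hcolk₀
      exact hRW k₀ j hne hcRWk₀ hcRWj (h1.trans h2.symm)
  · push_neg at hj
    have hTe : T = ∅ := by
      rw [Finset.eq_empty_iff_forall_notMem]
      intro k hkT
      rcases Finset.mem_filter.mp hkT with ⟨-, hWk, hck⟩
      have hkj : k < j := lt_of_le_of_ne (hTle k hkT) (by rintro rfl; exact hck hj)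
      have h1 : lowM (R * W) k = lowM R k := IH k hkj
      have h2 : lowM (R * W) j = T.sup (lowM R) := hls
      have hge : lowM R k ≤ T.sup (lowM R) := Finset.le_sup hkT
      -- show column (R*W) j nonzero and equal low to k: contradiction
      obtain ⟨k₀, hk₀T, hk₀⟩ := Finset.exists_mem_eq_sup T ⟨k, hkT⟩ (lowM R)
      have hcolk₀ : column R k₀ ≠ 0 := (Finset.mem_filter.mp hk₀T).2.2
      have hk₀j : k₀ < j := lt_of_le_of_ne (hTle k₀ hk₀T)
        (by rintro rfl; exact hcolk₀ hj)
      have h3 : lowM (R * W) j = lowM R k₀ := by rw [hls, hk₀]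
      have h4 : lowM (R * W) k₀ = lowM R k₀ := IH k₀ hk₀j
      have hcRWk₀ : column (R * W) k₀ ≠ 0 := by
        rw [col_ne_zero_iff_lowM, h4, ← col_ne_zero_iff_lowM]; exact hcolk₀
      have hcRWj : column (R * W) j ≠ 0 := by
        rw [col_ne_zero_iff_lowM, h3, ← col_ne_zero_iff_lowM]; exact hcolk₀
      exact hRW k₀ j (ne_of_lt hk₀j) hcRWk₀ hcRWj (h4.trans h3.symm)
    rw [hls, hTe, Finset.sup_empty]
    rw [lowM, low_eq_bot.mpr hj]

/-- uniqueness of the pairing. -/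
lemma low_unique {n : ℕ} (M : Matrix (Fin n) (Fin n) (ZMod 2))
    {V₁ V₂ : Matrix (Fin n) (Fin n) (ZMod 2)}
    (h₁ : IsUpperUnitriangular V₁) (h₂ : IsUpperUnitriangular V₂)
    (hr₁ : ReducedMat (M * V₁)) (hr₂ : ReducedMat (M * V₂)) :
    ∀ j, lowM (M * V₁) j = lowM (M * V₂) j := by
  obtain ⟨hinv, hVV, hVV'⟩ := unitri_inv h₁
  have hW : IsUpperUnitriangular (V₁⁻¹ * V₂) := unitri_mul hinv h₂
  have hkey : M * V₂ = (M * V₁) * (V₁⁻¹ * V₂) := by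
    rw [Matrix.mul_assoc, ← Matrix.mul_assoc V₁, hVV, Matrix.one_mul]
  intro j
  have := low_mul_eq hr₁ hW (by rw [← hkey]; exact hr₂) j
  rw [← hkey] at this
  exact this.symm

/-- clearing lemma: a low row index has zero column. -/
lemma clearing {n : ℕ} {D V : Matrix (Fin n) (Fin n) (ZMod 2)}
    (hDD : D * D = 0) (hV : IsUpperUnitriangular V)
    (hred : ReducedMat (D * V)) {i j : Fin n}
    (hlow : lowM (D * V) j = (i : WithBot (Fin n))) :
    column (D * V) i = 0 := by
  obtain ⟨hinv, hVV, hVV'⟩ := unitri_inv hV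
  set R := D * V with hR
  have hzero : R * (V⁻¹ * R) = 0 := by
    rw [hR, Matrix.mul_assoc, ← Matrix.mul_assoc V, hVV, Matrix.one_mul,
      ← Matrix.mul_assoc, hDD, Matrix.zero_mul]
  have hindep : ∀ k j' : Fin n, column R k ≠ 0 → (V⁻¹ * R) k j' = 0 := by
    intro k j' hcolk
    by_contra hNk
    have h0 : low (fun i' => ∑ m, R i' m * (V⁻¹ * R) m j') = ⊥ := by
      rw [low_eq_bot]
      funext i'
      have := congrFun (congrFun hzero i') j'
      rw [Matrix.mul_apply] at this
      exact this
    rw [low_sum hred] at h0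
    have hkmem : k ∈ Finset.univ.filter
        (fun m => (V⁻¹ * R) m j' ≠ 0 ∧ column R m ≠ 0) := by
      simp only [Finset.mem_filter]
      exact ⟨Finset.mem_univ _, hNk, hcolk⟩
    have hle := Finset.le_sup (f := lowM R) hkmem
    rw [h0, le_bot_iff] at hle
    exact (col_ne_zero_iff_lowM.mp hcolk) hle
  by_contra hcoli
  have hNi : (V⁻¹ * R) i j = 0 := hindep i j hcoli
  rw [Matrix.mul_apply] at hNi
  rw [Finset.sum_eq_single_of_mem i (Finset.mem_univ i)] at hNi
  · rw [hinv.2 i, one_mul] at hNi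
    exact (low_eq_coe_iff.mp hlow).1 hNi
  · intro m _ hmi
    rcases lt_or_ge m i with h | h
    · rw [hinv.1 i m h, zero_mul]
    · have hmi' : i < m := lt_of_le_of_ne h (Ne.symm hmi)
      have : R m j = 0 := by
        apply apply_eq_zero_of_low_lt (v := column R j)
        rw [show low (column R j) = (i : WithBot (Fin n)) from hlow]
        exact_mod_cast hmi'
      rw [this, mul_zero]

/-- the elementary "add column `a` to some later columns" matrix. -/
def colopM {n : ℕ} (a : Fin n) (χ : Fin n → ZMod 2) : Matrix (Fin n) (Fin n) (ZMod 2) :=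
  fun i j => if i = j then 1 else if i = a then χ j else 0

lemma colop_unitri {n : ℕ} (a : Fin n) (χ : Fin n → ZMod 2)
    (hχ : ∀ j, χ j ≠ 0 → a < j) : IsUpperUnitriangular (colopM a χ) := by
  constructor
  · intro i j hji
    rw [colopM]
    rw [if_neg (by rintro rfl; exact lt_irrefl _ hji)]
    rcases eq_or_ne i a with rfl | hia
    · rw [if_pos rfl]
      by_contra h
      exact absurd (hχ j h) (not_lt.mpr (le_of_lt hji))
    · rw [if_neg hia]
  · intro i; rw [colopM, if_pos rfl]

lemma colop_mul {n : ℕ} (M : Matrix (Fin n) (Fin n) (ZMod 2)) (a : Fin n)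
    (χ : Fin n → ZMod 2) (hχa : χ a = 0) (i j : Fin n) :
    (M * colopM a χ) i j = M i j + χ j * M i a := by
  rw [Matrix.mul_apply]
  have key : ∀ k, M i k * colopM a χ k j =
      (if k = j then M i k else 0) + (if k = a then χ j * M i k else 0) := by
    intro k
    rcases eq_or_ne k j with rfl | h1
    · rcases eq_or_ne k a with rfl | h2
      · rw [colopM, if_pos rfl, if_pos rfl, if_pos rfl, hχa, zero_mul, add_zero, mul_one]
      · rw [colopM, if_pos rfl, if_pos rfl, if_neg h2, add_zero, mul_one]
    · rcases eq_or_ne k a with rfl | h2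
      · rw [colopM, if_neg h1, if_pos rfl, if_neg h1, if_pos rfl, zero_add, mul_comm]
      · rw [colopM, if_neg h1, if_neg h2, if_neg h1, if_neg h2, add_zero, mul_zero]
  rw [Finset.sum_congr rfl (fun k _ => key k), Finset.sum_add_distrib,
    Finset.sum_ite_eq' Finset.univ j (fun k => M i k),
    Finset.sum_ite_eq' Finset.univ a (fun k => χ j * M i k),
    if_pos (Finset.mem_univ j), if_pos (Finset.mem_univ a)]

section Setup
variable {n : ℕ} {D : Matrix (Fin n) (Fin n) (ZMod 2)} {A b : Fin n}

/-- the indicator of columns to which column `A` gets added. -/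
def eps (D : Matrix (Fin n) (Fin n) (ZMod 2)) (A b : Fin n) : Fin n → ZMod 2 :=
  fun j => if j ≠ A ∧ D b j = 1 then 1 else 0

lemma eps_A : eps D A b A = 0 := by
  rw [eps, if_neg]; rintro ⟨h, -⟩; exact h rfl

lemma addColA_eq (i j : Fin n) :
    addColA D A b i j = D i j + eps D A b j * D i A := by
  rw [addColA, eps]
  by_cases h : j ≠ A ∧ D b j = 1
  · rw [if_pos h, if_pos h, one_mul]
  · rw [if_neg h, if_neg h, zero_mul, add_zero]

variable (hDD : D * D = 0) (hzero : ∀ j : Fin n, j < A → column D j = 0)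
  (hb : lowM D A = (b : WithBot (Fin n)))

include hb in
lemma DbA_one : D b A = 1 := by
  have := (low_eq_coe_iff.mp hb).1
  exact zmod2_ne_zero this

include hzero in
lemma D_entry_lt {i j : Fin n} (h : j < A) : D i j = 0 := by
  have := hzero j h
  exact congrFun this i

include hDD hzero hb in
lemma b_ne_A : b ≠ A := by
  rintro rfl
  have hAA : D b b = 1 := DbA_one hb
  have h0 : (D * D) b b = 0 := by rw [hDD]; rfl
  rw [Matrix.mul_apply] at h0
  rw [Finset.sum_eq_single_of_mem b (Finset.mem_univ b)] at h0
  · rw [hAA, one_mul] at h0; exact one_ne_zero h0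
  · intro k _ hk
    rcases lt_or_gt_of_ne hk with h | h
    · rw [D_entry_lt hzero h, zero_mul]
    · have : D k b = 0 := by
        apply apply_eq_zero_of_low_lt (v := column D b)
        rw [show low (column D b) = (b : WithBot (Fin n)) from hb]
        exact_mod_cast h
      rw [this, mul_zero]

include hDD hzero hb in
lemma eps_sum (j : Fin n) : ∑ k, eps D A b k * D k j = D A j := by
  have key : ∀ k, D b k * D k j =
      eps D A b k * D k j + (if k = A then D A j else 0) := by
    intro k
    rcases eq_or_ne k A with rfl | hk
    · rw [if_pos rfl, eps_A, zero_mul, zero_add, DbA_one hb, one_mul]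
    · rw [if_neg hk, add_zero, eps]
      rcases eq_or_ne (D b k) 0 with h0 | h1
      · rw [h0, zero_mul, if_neg (by rintro ⟨-, h⟩; exact one_ne_zero h.symm), zero_mul]
      · rw [zmod2_ne_zero h1, if_pos ⟨hk, rfl⟩]
  have h0 : (D * D) b j = 0 := by rw [hDD]; rfl
  rw [Matrix.mul_apply] at h0
  rw [Finset.sum_congr rfl (fun k _ => key k), Finset.sum_add_distrib,
    Finset.sum_ite_eq' Finset.univ A (fun _ => D A j), if_pos (Finset.mem_univ A)] at h0
  exact zmod2_cancel h0

include hDD hzero hb in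
lemma E_sq (i j : Fin n) :
    ∑ k, addColA D A b i k * addColA D A b k j =
      addColA D A b i A * addColA D A b A j := by
  have expand : ∀ k, addColA D A b i k * addColA D A b k j =
      D i k * D k j + eps D A b j * (D i k * D k A) +
        D i A * (eps D A b k * D k j) +
        (D i A * eps D A b j) * (eps D A b k * D k A) := by
    intro k; rw [addColA_eq, addColA_eq]; ring
  rw [Finset.sum_congr rfl (fun k _ => expand k)]
  rw [Finset.sum_add_distrib, Finset.sum_add_distrib, Finset.sum_add_distrib]
  rw [← Finset.mul_sum, ← Finset.mul_sum, ← Finset.mul_sum]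
  have h1 : ∑ k, D i k * D k j = 0 := by
    have := congrFun (congrFun hDD i) j
    rw [Matrix.mul_apply] at this; exact this
  have h2 : ∑ k, D i k * D k A = 0 := by
    have := congrFun (congrFun hDD i) A
    rw [Matrix.mul_apply] at this; exact this
  rw [h1, h2, eps_sum hDD hzero hb j, eps_sum hDD hzero hb A]
  rw [addColA_eq, addColA_eq, eps_A]
  ring

include hzero hb in
lemma E_row_b (j : Fin n) : addColA D A b b j = if j = A then 1 else 0 := by
  rcases eq_or_ne j A with rfl | hj
  · rw [if_pos rfl, addColA_eq, eps_A, zero_mul, add_zero, DbA_one hb]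
  · rw [if_neg hj, addColA_eq, eps, DbA_one hb, mul_one]
    rcases eq_or_ne (D b j) 0 with h0 | h1
    · rw [h0, if_neg (by rintro ⟨-, h⟩; exact one_ne_zero h.symm), zero_add]
    · rw [zmod2_ne_zero h1, if_pos ⟨hj, rfl⟩, zmod2_add_self]
end Setup

section Reindex
variable {n : ℕ} {A b : Fin n} (hbA : b ≠ A)
  (hcard : ({b, A}ᶜ : Finset (Fin n)).card = n - 2)

lemma emb_mem (r : Fin (n - 2)) :
    Finset.orderEmbOfFin _ hcard r ∈ ({b, A}ᶜ : Finset (Fin n)) :=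
  Finset.orderEmbOfFin_mem _ hcard r

lemma emb_ne_b (r : Fin (n - 2)) : Finset.orderEmbOfFin _ hcard r ≠ b := by
  have := emb_mem hcard r
  rw [Finset.mem_compl, Finset.mem_insert] at this
  push_neg at this
  exact this.1

lemma emb_ne_A (r : Fin (n - 2)) : Finset.orderEmbOfFin _ hcard r ≠ A := by
  have := emb_mem hcard r
  rw [Finset.mem_compl, Finset.mem_insert, Finset.mem_singleton] at this
  push_neg at this
  exact this.2

lemma emb_image :
    Finset.univ.image (fun r : Fin (n - 2) => Finset.orderEmbOfFin _ hcard r) =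
      ({b, A}ᶜ : Finset (Fin n)) := by
  apply Finset.eq_of_subset_of_card_le
  · intro x hx
    rcases Finset.mem_image.mp hx with ⟨r, -, rfl⟩
    exact emb_mem hcard r
  · rw [hcard, Finset.card_image_of_injective _ (Finset.orderEmbOfFin _ hcard).injective,
      Finset.card_univ, Fintype.card_fin]

lemma emb_surj {j : Fin n} (hjb : j ≠ b) (hjA : j ≠ A) :
    ∃ q : Fin (n - 2), Finset.orderEmbOfFin _ hcard q = j := by
  have hj : j ∈ ({b, A}ᶜ : Finset (Fin n)) := by
    rw [Finset.mem_compl, Finset.mem_insert, Finset.mem_singleton]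
    push_neg; exact ⟨hjb, hjA⟩
  rw [← emb_image hcard, Finset.mem_image] at hj
  rcases hj with ⟨q, -, hq⟩
  exact ⟨q, hq⟩

include hbA in
lemma sum_split (f : Fin n → ZMod 2) :
    ∑ k, f k = f b + f A + ∑ r : Fin (n - 2), f (Finset.orderEmbOfFin _ hcard r) := by
  have h1 : ∑ k ∈ ({b, A}ᶜ : Finset (Fin n)), f k +
      ∑ k ∈ ({b, A} : Finset (Fin n)), f k = ∑ k, f k := by
    have := Finset.sum_add_sum_compl ({b, A}ᶜ : Finset (Fin n)) f
    rw [compl_compl] at this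
    exact this
  have h2 : ∑ k ∈ ({b, A} : Finset (Fin n)), f k = f b + f A :=
    Finset.sum_pair hbA
  have h3 : ∑ k ∈ ({b, A}ᶜ : Finset (Fin n)), f k =
      ∑ r : Fin (n - 2), f (Finset.orderEmbOfFin _ hcard r) := by
    conv_lhs => rw [← emb_image hcard]
    exact Finset.sum_image (fun x _ y _ h => (Finset.orderEmbOfFin _ hcard).injective h)
  rw [← h1, h2, h3]
  ring
end Reindex

section Part1
variable {n : ℕ} {D : Matrix (Fin n) (Fin n) (ZMod 2)} {A b : Fin n}

lemma part1 (hDD : D * D = 0) (hzero : ∀ j : Fin n, j < A → column D j = 0)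
    (hb : lowM D A = (b : WithBot (Fin n)))
    (hcard : ({b, A}ᶜ : Finset (Fin n)).card = n - 2) :
    morseReduce D A b hcard * morseReduce D A b hcard = 0 := by
  have hbA : b ≠ A := b_ne_A hDD hzero hb
  funext p q
  rw [Matrix.mul_apply]
  have hsplit := sum_split hbA hcard
    (fun k => addColA D A b (Finset.orderEmbOfFin _ hcard p) k *
      addColA D A b k (Finset.orderEmbOfFin _ hcard q))
  rw [E_sq hDD hzero hb, E_row_b hzero hb, if_neg (emb_ne_A hcard q), mul_zero,
    zero_add] at hsplit
  have hS := left_eq_add.mp hsplit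
  exact hS
end Part1

lemma ne_zero_of_apply {n : ℕ} {v : Fin n → ZMod 2} {i : Fin n} (h : v i ≠ 0) : v ≠ 0 :=
  fun h0 => h (by rw [h0]; rfl)

section Main
variable {n : ℕ} {D : Matrix (Fin n) (Fin n) (ZMod 2)} {A b : Fin n}
  (hDD : D * D = 0) (hzero : ∀ j : Fin n, j < A → column D j = 0)
  (hA : column D A ≠ 0) (hb : lowM D A = (b : WithBot (Fin n)))
  (hcard : ({b, A}ᶜ : Finset (Fin n)).card = n - 2)
  {V : Matrix (Fin n) (Fin n) (ZMod 2)} (hV : IsUpperUnitriangular V)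
  (hred : ReducedMat (D * V))

include hzero hV in
lemma colRA : column (D * V) A = column D A := by
  funext i
  show (D * V) i A = D i A
  rw [Matrix.mul_apply, Finset.sum_eq_single_of_mem A (Finset.mem_univ A)]
  · rw [hV.2, mul_one]
  · intro k _ hk
    rcases lt_or_gt_of_ne hk with h | h
    · rw [D_entry_lt hzero h, zero_mul]
    · rw [hV.1 k A h, mul_zero]

include hzero hb hV in
lemma lowRA : lowM (D * V) A = (b : WithBot (Fin n)) := by
  rw [lowM, colRA hzero hV]
  exact hb

include hzero hA hV in
lemma colRA_ne : column (D * V) A ≠ 0 := by rw [colRA hzero hV]; exact hA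

include hDD hzero hb hV hred in
lemma colRb : column (D * V) b = 0 :=
  clearing hDD hV hred (lowRA hzero hb hV)

include hzero hV in
lemma colRlt {j : Fin n} (h : j < A) : column (D * V) j = 0 := by
  funext i
  show (D * V) i j = 0
  rw [Matrix.mul_apply]
  apply Finset.sum_eq_zero
  intro k _
  rcases lt_or_ge k A with hk | hk
  · rw [D_entry_lt hzero hk, zero_mul]
  · rw [hV.1 k j (lt_of_lt_of_le h hk), mul_zero]

include hDD hzero hA hb hV hred in
/-- The key construction: a reduction of `morseReduce D A b` built out of `V`,
whose lows match those of `D * V` under the inclusion. -/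
lemma main_aux :
    ∃ V'' : Matrix (Fin (n - 2)) (Fin (n - 2)) (ZMod 2),
      IsUpperUnitriangular V'' ∧ ReducedMat (morseReduce D A b hcard * V'') ∧
      (∀ q : Fin (n - 2),
        (column (morseReduce D A b hcard * V'') q = 0 ↔
          column (D * V) (Finset.orderEmbOfFin _ hcard q) = 0)) ∧
      (∀ (q i' : Fin (n - 2)),
        lowM (morseReduce D A b hcard * V'') q = (i' : WithBot (Fin (n - 2))) →
        lowM (D * V) (Finset.orderEmbOfFin _ hcard q) =
          ((Finset.orderEmbOfFin _ hcard i' : Fin n) : WithBot (Fin n))) := by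
  have hbA : b ≠ A := b_ne_A hDD hzero hb
  set R := D * V with hRdef
  set emb := Finset.orderEmbOfFin ({b, A}ᶜ : Finset (Fin n)) hcard with hembdef
  -- step: the first column operation χ / K₁
  set χ : Fin n → ZMod 2 := fun j => if j = A then 0 else R b j with hχdef
  have hχA : χ A = 0 := by rw [hχdef]; simp
  have hχlt : ∀ j, χ j ≠ 0 → A < j := by
    intro j hj
    have hjA : j ≠ A := by rintro rfl; exact hj hχA
    have hRbj : R b j ≠ 0 := by
      intro h0; apply hj; rw [hχdef]; simp [hjA, h0]
    rcases lt_trichotomy j A with h | h | h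
    · exact absurd (congrFun (colRlt hzero hV h) b) hRbj
    · exact absurd h hjA
    · exact h
  have hK₁ : IsUpperUnitriangular (colopM A χ) := colop_unitri A χ hχlt
  set V₂ := V * colopM A χ with hV₂def
  have hV₂ : IsUpperUnitriangular V₂ := unitri_mul hV hK₁
  set R₂ := D * V₂ with hR₂def
  have hR₂e : ∀ i j, R₂ i j = R i j + χ j * R i A := by
    intro i j
    rw [hR₂def, hV₂def, ← Matrix.mul_assoc, ← hRdef, colop_mul R A χ hχA]
  -- basic facts about R and R₂
  have hcolRA := colRA hzero hV
  have hcolRAne := colRA_ne hzero hA hV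
  have hlowRA := lowRA hzero hb hV
  have hcolRb := colRb hDD hzero hb hV hred
  have hRbA : R b A = 1 := by
    have : R b A = D b A := congrFun hcolRA b
    rw [this, DbA_one hb]
  have hcolR₂A : column R₂ A = column D A := by
    funext i
    show R₂ i A = D i A
    rw [hR₂e, hχA, zero_mul, add_zero]
    exact congrFun hcolRA i
  have hR₂bj : ∀ j, j ≠ A → R₂ b j = 0 := by
    intro j hjA
    rw [hR₂e, hRbA, mul_one, hχdef]
    simp only [if_neg hjA]
    exact zmod2_add_self _
  have hcolR₂b : column R₂ b = 0 := by
    funext i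
    show R₂ i b = 0
    have hχb : χ b = 0 := by
      rw [hχdef]; simp only [if_neg hbA]
      exact congrFun hcolRb b
    rw [hR₂e, hχb, zero_mul, add_zero]
    exact congrFun hcolRb i
  have hlow₂ : ∀ j, lowM R₂ j = lowM R j := by
    intro j
    by_cases hχj : χ j = 0
    · have : column R₂ j = column R j := by
        funext i; show R₂ i j = R i j; rw [hR₂e, hχj, zero_mul, add_zero]
      rw [lowM, lowM, this]
    · have hχj1 : χ j = 1 := zmod2_ne_zero hχj
      have hjA : j ≠ A := by rintro rfl; exact hχj hχA
      have hRbj : R b j ≠ 0 := by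
        intro h0; apply hχj; rw [hχdef]; simp [hjA, h0]
      have hcolj : column R j ≠ 0 := ne_zero_of_apply (i := b) hRbj
      obtain ⟨ij, hij⟩ := low_ne_bot hcolj
      have hlowj : lowM R j = (ij : WithBot (Fin n)) := hij
      have hbij : b < ij := by
        have hle : (b : WithBot (Fin n)) ≤ lowM R j := by
          show _ ≤ (Finset.univ.filter (fun i => column R j i ≠ 0)).max
          exact Finset.le_max (by
            simp only [Finset.mem_filter, Finset.mem_univ, true_and]
            exact hRbj)
        have hne : lowM R j ≠ (b : WithBot (Fin n)) := by
          rw [← hlowRA]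
          exact hred j A hjA hcolj hcolRAne
        rw [hlowj] at hle hne
        exact_mod_cast lt_of_le_of_ne hle (fun h => hne (by rw [h]))
      rw [hlowj, lowM, low_eq_coe_iff]
      constructor
      · show R₂ ij j ≠ 0
        rw [hR₂e, hχj1, one_mul]
        have hA0 : R ij A = 0 := by
          apply apply_eq_zero_of_low_lt (v := column R A)
          rw [show low (column R A) = (b : WithBot (Fin n)) from hlowRA]
          exact_mod_cast hbij
        rw [hA0, add_zero]
        exact (low_eq_coe_iff.mp hij).1
      · intro m hm
        show R₂ m j = 0
        rw [hR₂e, hχj1, one_mul]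
        have h1 : R m j = 0 := (low_eq_coe_iff.mp hij).2 m hm
        have h2 : R m A = 0 := by
          apply apply_eq_zero_of_low_lt (v := column R A)
          rw [show low (column R A) = (b : WithBot (Fin n)) from hlowRA]
          exact_mod_cast lt_trans hbij hm
        rw [h1, h2, add_zero]
  have hcol₂iff : ∀ j, column R₂ j = 0 ↔ column R j = 0 := by
    intro j
    have e2 : column R₂ j = 0 ↔ lowM R₂ j = ⊥ := Iff.symm low_eq_bot
    have e1 : column R j = 0 ↔ lowM R j = ⊥ := Iff.symm low_eq_bot
    rw [e1, e2, hlow₂ j]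
  have hred₂ : ReducedMat R₂ := by
    intro j k hjk hcj hck
    rw [hlow₂ j, hlow₂ k]
    refine hred j k hjk ?_ ?_
    · intro h; exact hcj ((hcol₂iff j).mpr h)
    · intro h; exact hck ((hcol₂iff k).mpr h)
  -- the C matrix turning D into E
  have hepslt : ∀ j, eps D A b j ≠ 0 → A < j := by
    intro j hj
    have hcond : j ≠ A ∧ D b j = 1 := by
      by_contra hc
      apply hj; rw [eps, if_neg hc]
    rcases lt_trichotomy j A with h | h | h
    · exact absurd (D_entry_lt hzero (i := b) h ▸ hcond.2) (by simp)
    · exact absurd h hcond.1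
    · exact h
  have hC : IsUpperUnitriangular (colopM A (eps D A b)) := colop_unitri A _ hepslt
  have hDC : D * colopM A (eps D A b) = addColA D A b := by
    funext i j
    rw [colop_mul D A _ eps_A, addColA_eq]
  have hCiA : ∀ i : Fin n, colopM A (eps D A b) i A = if i = A then 1 else 0 := by
    intro i
    rcases eq_or_ne i A with rfl | h
    · rw [colopM, if_pos rfl, if_pos rfl]
    · rw [colopM, if_neg h, if_neg h, if_neg h]
  have hCC : colopM A (eps D A b) * colopM A (eps D A b) = 1 := by
    funext i j
    rw [colop_mul _ A _ eps_A, hCiA]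
    by_cases hiA : i = A
    · rw [if_pos hiA, mul_one, hiA]
      by_cases hjA : j = A
      · rw [hjA, colopM]
        rw [if_pos rfl, eps_A, add_zero, Matrix.one_apply_eq]
      · have hAj : A ≠ j := fun h => hjA h.symm
        rw [colopM]
        rw [if_neg hAj, if_pos rfl, zmod2_add_self, Matrix.one_apply_ne hAj]
    · rw [if_neg hiA, mul_zero, add_zero]
      by_cases hij : i = j
      · rw [colopM]
        rw [if_pos hij, hij, Matrix.one_apply_eq]
      · rw [colopM]
        rw [if_neg hij, if_neg hiA, Matrix.one_apply_ne hij]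
  set W₁ := colopM A (eps D A b) * V₂ with hW₁def
  have hW₁ : IsUpperUnitriangular W₁ := unitri_mul hC hV₂
  have hEW₁ : addColA D A b * W₁ = R₂ := by
    rw [hW₁def, ← hDC, ← Matrix.mul_assoc, Matrix.mul_assoc D _ _, hCC,
      Matrix.mul_one, hR₂def]
  have hW₁A : ∀ j, j ≠ A → W₁ A j = 0 := by
    intro j hjA
    have h1 : (addColA D A b * W₁) b j = W₁ A j := by
      rw [Matrix.mul_apply, Finset.sum_eq_single_of_mem A (Finset.mem_univ A)]
      · rw [E_row_b hzero hb, if_pos rfl, one_mul]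
      · intro k _ hk
        rw [E_row_b hzero hb, if_neg hk, zero_mul]
    rw [hEW₁] at h1
    rw [← h1]
    exact hR₂bj j hjA
  -- second column operation to clear row b of W₁
  set χ₂ : Fin n → ZMod 2 := fun j => if j = A ∨ j = b then 0 else W₁ b j with hχ₂def
  have hχ₂b : χ₂ b = 0 := by rw [hχ₂def]; simp
  have hχ₂lt : ∀ j, χ₂ j ≠ 0 → b < j := by
    intro j hj
    have hcond : ¬(j = A ∨ j = b) := by
      by_contra hc; apply hj; simp only [hχ₂def]; rw [if_pos hc]
    push_neg at hcond
    have hW1bj : W₁ b j ≠ 0 := by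
      intro h0; apply hj; simp only [hχ₂def]
      rw [if_neg (by push_neg; exact hcond)]; exact h0
    rcases lt_trichotomy j b with h | h | h
    · exact absurd (hW₁.1 b j h) hW1bj
    · exact absurd h hcond.2
    · exact h
  have hK₂ : IsUpperUnitriangular (colopM b χ₂) := colop_unitri b χ₂ hχ₂lt
  set W₂ := W₁ * colopM b χ₂ with hW₂def
  have hW₂ : IsUpperUnitriangular W₂ := unitri_mul hW₁ hK₂
  have hEW₂ : addColA D A b * W₂ = R₂ := by
    rw [hW₂def, ← Matrix.mul_assoc, hEW₁]
    funext i j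
    rw [colop_mul R₂ b χ₂ hχ₂b]
    have : R₂ i b = 0 := congrFun hcolR₂b i
    rw [this, mul_zero, add_zero]
  have hW₂A : ∀ j, j ≠ A → W₂ A j = 0 := by
    intro j hjA
    rw [hW₂def, colop_mul W₁ b χ₂ hχ₂b, hW₁A j hjA, hW₁A b (Ne.symm (fun h => hbA h.symm)),
      mul_zero, add_zero]
  have hW₂b : ∀ j, j ≠ A → j ≠ b → W₂ b j = 0 := by
    intro j hjA hjb
    have hχ₂j : χ₂ j = W₁ b j := by
      simp only [hχ₂def]
      rw [if_neg (by push_neg; exact ⟨hjA, hjb⟩)]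
    rw [hW₂def, colop_mul W₁ b χ₂ hχ₂b, hW₁.2, mul_one, hχ₂j]
    exact zmod2_add_self _
  -- no column of R₂ has low A
  have hnoA : ∀ j, lowM R₂ j ≠ (A : WithBot (Fin n)) := by
    intro j hj
    have := clearing hDD hV₂ (by rw [← hR₂def]; exact hred₂) (by rw [← hR₂def]; exact hj)
    rw [← hR₂def] at this
    rw [hcolR₂A] at this
    exact hA this
  -- the induced matrix V''
  set V'' : Matrix (Fin (n - 2)) (Fin (n - 2)) (ZMod 2) :=
    fun p q => W₂ (emb p) (emb q) with hV''def
  have hV''tri : IsUpperUnitriangular V'' := by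
    constructor
    · intro p q hqp
      exact hW₂.1 _ _ (emb.strictMono hqp)
    · intro p
      exact hW₂.2 _
  have hMV : ∀ p q, (morseReduce D A b hcard * V'') p q = R₂ (emb p) (emb q) := by
    intro p q
    have hrhs : R₂ (emb p) (emb q) = ∑ k, addColA D A b (emb p) k * W₂ k (emb q) := by
      rw [← hEW₂, Matrix.mul_apply]
    rw [hrhs, sum_split hbA hcard (fun k => addColA D A b (emb p) k * W₂ k (emb q))]
    rw [hW₂b (emb q) (emb_ne_A hcard q) (emb_ne_b hcard q), mul_zero,
      hW₂A (emb q) (emb_ne_A hcard q), mul_zero, zero_add, zero_add]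
    rfl
  have hcola : ∀ q, column (morseReduce D A b hcard * V'') q = 0 ↔
      column R₂ (emb q) = 0 := by
    intro q
    constructor
    · intro h0
      by_contra hc
      obtain ⟨m, hm⟩ := low_ne_bot hc
      have hm' : lowM R₂ (emb q) = (m : WithBot (Fin n)) := hm
      have hmA : m ≠ A := by
        rintro rfl; exact hnoA (emb q) hm'
      have hmb : m ≠ b := by
        rintro rfl
        exact (low_eq_coe_iff.mp hm).1 (hR₂bj (emb q) (emb_ne_A hcard q))
      obtain ⟨p₀, hp₀⟩ := emb_surj hcard hmb hmA
      have hne0 : column (morseReduce D A b hcard * V'') q p₀ ≠ 0 := by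
        show (morseReduce D A b hcard * V'') p₀ q ≠ 0
        rw [hMV p₀ q, hp₀]
        exact (low_eq_coe_iff.mp hm).1
      exact hne0 (congrFun h0 p₀)
    · intro h0
      funext p
      show (morseReduce D A b hcard * V'') p q = 0
      rw [hMV p q]
      exact congrFun h0 (emb p)
  have hlowb : ∀ q, column R₂ (emb q) ≠ 0 →
      ∃ i' : Fin (n - 2), lowM (morseReduce D A b hcard * V'') q = (i' : WithBot (Fin (n - 2))) ∧
        lowM R₂ (emb q) = ((emb i' : Fin n) : WithBot (Fin n)) := by
    intro q hc2
    have hc1 : column (morseReduce D A b hcard * V'') q ≠ 0 := by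
      intro h; exact hc2 ((hcola q).mp h)
    obtain ⟨i', hi'⟩ := low_ne_bot hc1
    obtain ⟨m, hm⟩ := low_ne_bot hc2
    have hm' : lowM R₂ (emb q) = (m : WithBot (Fin n)) := hm
    have hmA : m ≠ A := by rintro rfl; exact hnoA (emb q) hm'
    have hmb : m ≠ b := by
      rintro rfl
      exact (low_eq_coe_iff.mp hm).1 (hR₂bj (emb q) (emb_ne_A hcard q))
    obtain ⟨p₀, hp₀⟩ := emb_surj hcard hmb hmA
    have hp₀i' : p₀ ≤ i' := by
      by_contra hgt
      have h0 : column (morseReduce D A b hcard * V'') q p₀ = 0 :=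
        (low_eq_coe_iff.mp hi').2 p₀ (not_le.mp hgt)
      have h0' : R₂ (emb p₀) (emb q) = 0 := by
        rw [← hMV p₀ q]; exact h0
      rw [hp₀] at h0'
      exact (low_eq_coe_iff.mp hm).1 h0'
    have hio : R₂ (emb i') (emb q) ≠ 0 := by
      have h1 := (low_eq_coe_iff.mp hi').1
      have : (morseReduce D A b hcard * V'') i' q ≠ 0 := h1
      rw [hMV i' q] at this
      exact this
    have h1 : (emb i' : Fin n) ≤ m := by
      by_contra hgt
      exact hio ((low_eq_coe_iff.mp hm).2 _ (not_le.mp hgt))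
    have h2 : m ≤ (emb i' : Fin n) := by
      rw [← hp₀]
      exact emb.monotone hp₀i'
    refine ⟨i', hi', ?_⟩
    rw [hm', le_antisymm h2 h1]
  have hred'' : ReducedMat (morseReduce D A b hcard * V'') := by
    intro q₁ q₂ hne hc1 hc2
    have hc1' : column R₂ (emb q₁) ≠ 0 := fun h => hc1 ((hcola q₁).mpr h)
    have hc2' : column R₂ (emb q₂) ≠ 0 := fun h => hc2 ((hcola q₂).mpr h)
    obtain ⟨i₁, hi₁, hm₁⟩ := hlowb q₁ hc1'
    obtain ⟨i₂, hi₂, hm₂⟩ := hlowb q₂ hc2'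
    intro heq
    rw [hi₁, hi₂] at heq
    have hii : i₁ = i₂ := by exact_mod_cast heq
    have hemb : lowM R₂ (emb q₁) = lowM R₂ (emb q₂) := by rw [hm₁, hm₂, hii]
    exact hred₂ (emb q₁) (emb q₂) (fun h => hne (emb.injective h)) hc1' hc2' hemb
  refine ⟨V'', hV''tri, hred'', ?_, ?_⟩
  · intro q
    exact (hcola q).trans (hcol₂iff (emb q))
  · intro q i' h
    have hc1 : column (morseReduce D A b hcard * V'') q ≠ 0 := by
      rw [col_ne_zero_iff_lowM, h]
      exact WithBot.coe_ne_bot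
    have hc2 : column R₂ (emb q) ≠ 0 := fun h0 => hc1 ((hcola q).mpr h0)
    obtain ⟨i'', hi'', hm''⟩ := hlowb q hc2
    have : i'' = i' := by
      rw [h] at hi''
      exact_mod_cast hi''.symm
    rw [← hlow₂ (emb q), hm'', this]

end Main
end MorseAux

open MorseAux in
/-- Making a single Morse matching `(A, b)` is equivalent to resolving at once all
future collisions caused by row `b` in the matrix-reduction algorithm: `D'·D' = 0`,
and the lowest-one pairs of any reduction of `D` are exactly the pair `(b, A)`
together with the (re-indexed) lowest-one pairs of any reduction of `D'`. -/
theorem morse_matching_step {n : ℕ} (D : Matrix (Fin n) (Fin n) (ZMod 2))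
    (hDD : D * D = 0) (A b : Fin n)
    (hzero : ∀ j : Fin n, j < A → column D j = 0) (hA : column D A ≠ 0)
    (hb : lowM D A = (b : WithBot (Fin n)))
    (hcard : ({b, A}ᶜ : Finset (Fin n)).card = n - 2) :
    morseReduce D A b hcard * morseReduce D A b hcard = 0 ∧
      ∀ (V : Matrix (Fin n) (Fin n) (ZMod 2))
        (V' : Matrix (Fin (n - 2)) (Fin (n - 2)) (ZMod 2)),
        IsUpperUnitriangular V → IsUpperUnitriangular V' →
        ReducedMat (D * V) → ReducedMat (morseReduce D A b hcard * V') →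
        {p : Fin n × Fin n |
            column (D * V) p.2 ≠ 0 ∧ lowM (D * V) p.2 = (p.1 : WithBot (Fin n))} =
          insert (b, A)
            ((fun q : Fin (n - 2) × Fin (n - 2) =>
                ((Finset.orderEmbOfFin _ hcard q.1 : Fin n),
                  (Finset.orderEmbOfFin _ hcard q.2 : Fin n))) ''
              {q : Fin (n - 2) × Fin (n - 2) |
                column (morseReduce D A b hcard * V') q.2 ≠ 0 ∧
                  lowM (morseReduce D A b hcard * V') q.2 =
                    (q.1 : WithBot (Fin (n - 2)))}) := by
  refine ⟨part1 hDD hzero hb hcard, ?_⟩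
  intro V V' hV hV' hred hred'
  obtain ⟨V'', hV''tri, hred'', hcols, hlowt⟩ := main_aux hDD hzero hA hb hcard hV hred
  have huniq := low_unique (morseReduce D A b hcard) hV' hV''tri hred' hred''
  have hcolRAne := colRA_ne hzero hA hV
  have hlowRA := lowRA hzero hb hV
  have hcolRb := colRb hDD hzero hb hV hred
  ext ⟨i, j⟩
  simp only [Set.mem_setOf_eq, Set.mem_insert_iff, Set.mem_image, Prod.mk.injEq, Prod.exists]
  constructor
  · rintro ⟨hc, hl⟩
    by_cases hjA : j = A
    · subst hjA
      left
      refine ⟨?_, rfl⟩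
      have : (i : WithBot (Fin n)) = (b : WithBot (Fin n)) := hl.symm.trans hlowRA
      exact_mod_cast this
    · by_cases hjb : j = b
      · exact absurd hcolRb (by rw [← hjb]; exact hc)
      · right
        obtain ⟨q, hq⟩ := emb_surj hcard hjb hjA
        have hcq : column (D * V) (Finset.orderEmbOfFin _ hcard q) ≠ 0 := by
          rw [hq]; exact hc
        have hcq'' : column (morseReduce D A b hcard * V'') q ≠ 0 :=
          fun h => hcq ((hcols q).mp h)
        obtain ⟨i', hi'⟩ := low_ne_bot hcq''
        have hi'' : lowM (morseReduce D A b hcard * V'') q =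
            (i' : WithBot (Fin (n - 2))) := hi'
        have hlq := hlowt q i' hi''
        rw [hq, hl] at hlq
        have hii : i = Finset.orderEmbOfFin _ hcard i' := by exact_mod_cast hlq
        refine ⟨i', q, ⟨?_, ?_⟩, hii.symm, hq⟩
        · rw [col_ne_zero_iff_lowM, huniq q, hi'']
          exact WithBot.coe_ne_bot
        · rw [huniq q, hi'']
  · rintro (⟨hi, hj⟩ | ⟨i', q, ⟨hc', hl'⟩, hi, hj⟩)
    · subst hi; subst hj
      exact ⟨hcolRAne, hlowRA⟩
    · subst hi; subst hj
      have hdd : lowM (morseReduce D A b hcard * V'') q =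
          (i' : WithBot (Fin (n - 2))) := (huniq q).symm.trans hl'
      have hcq'' : column (morseReduce D A b hcard * V'') q ≠ 0 := by
        rw [col_ne_zero_iff_lowM, hdd]
        exact WithBot.coe_ne_bot
      refine ⟨?_, hlowt q i' hdd⟩
      intro h0
      exact hcq'' ((hcols q).mpr h0)
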